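/- Let (A, B, H) be a P-module and ξ ∈ H a nonzero vector contained in a ray p (i.e., ‖pₙξ‖ = ‖ξ‖ for all n). If the first digit of p is 0, then Aξ is contained in the shifted ray ₁p (obtained by deleting the first digit of p) and Bξ = 0; if the first digit of p is 1, then Bξ is contained in ₁p and Aξ = 0. -/

import Mathlib

open Filter Topology
open scoped InnerProductSpace

/-- Action of a finite binary word on a vector: digit `false` acts by `A`,
digit `true` by `B`, with the first digit acting first. -/
noncomputable def wordAct {H : Type*} [NormedAddCommGroup H] [InnerProductSpace ℂ H]
    (A B : H →L[ℂ] H) : List Bool → H → H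
  | [], ξ => ξ
  | b :: rest, ξ => wordAct A B rest ((if b then B else A) ξ)

/-- The length-`n` prefix of a ray `p : ℕ → Bool` as a list. -/
def pre (p : ℕ → Bool) (n : ℕ) : List Bool := List.ofFn fun i : Fin n => p i

/-- The Pythagorean equality `A*A + B*B = id`. -/
def IsPyth {H : Type*} [NormedAddCommGroup H] [InnerProductSpace ℂ H] [CompleteSpace H]
    (A B : H →L[ℂ] H) : Prop :=
  (ContinuousLinearMap.adjoint A).comp A + (ContinuousLinearMap.adjoint B).comp B =
    ContinuousLinearMap.id ℂ H

/-- `ξ` is a nonzero vector contained in the ray `p`. -/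
noncomputable def ContainedIn {H : Type*} [NormedAddCommGroup H] [InnerProductSpace ℂ H]
    (A B : H →L[ℂ] H) (p : ℕ → Bool) (ξ : H) : Prop :=
  ξ ≠ 0 ∧ ∀ n : ℕ, ‖wordAct A B (pre p n) ξ‖ = ‖ξ‖

lemma pyth_norm {H : Type*} [NormedAddCommGroup H] [InnerProductSpace ℂ H]
    [CompleteSpace H] (A B : H →L[ℂ] H) (hAB : IsPyth A B) (ξ : H) :
    ‖A ξ‖ ^ 2 + ‖B ξ‖ ^ 2 = ‖ξ‖ ^ 2 := by
  have h := congrArg (fun T : H →L[ℂ] H => ⟪ξ, T ξ⟫_ℂ) hAB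
  simp only [ContinuousLinearMap.add_apply, ContinuousLinearMap.comp_apply,
    ContinuousLinearMap.id_apply, inner_add_right,
    ContinuousLinearMap.adjoint_inner_right] at h
  have h2 := congrArg Complex.re h
  have e : ∀ x : H, (⟪x, x⟫_ℂ).re = ‖x‖ ^ 2 := fun x => inner_self_eq_norm_sq (𝕜 := ℂ) x
  simpa [e, ← Complex.ofReal_pow] using h2

lemma pre_succ (p : ℕ → Bool) (n : ℕ) :
    pre p (n + 1) = p 0 :: pre (fun k => p (k + 1)) n := by
  simp [pre, List.ofFn_succ]

theorem stmt9 {H : Type*} [NormedAddCommGroup H] [InnerProductSpace ℂ H]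
    [CompleteSpace H] (A B : H →L[ℂ] H) (hAB : IsPyth A B)
    (p : ℕ → Bool) (ξ : H) (hξ : ContainedIn A B p ξ) :
    (p 0 = false → ContainedIn A B (fun n => p (n + 1)) (A ξ) ∧ B ξ = 0) ∧
    (p 0 = true → ContainedIn A B (fun n => p (n + 1)) (B ξ) ∧ A ξ = 0) := by
  obtain ⟨hne, hnorm⟩ := hξ
  have key : ∀ n, ‖wordAct A B (pre (fun k => p (k+1)) n) ((if p 0 then B else A) ξ)‖ = ‖ξ‖ := by
    intro n
    have := hnorm (n + 1)
    rwa [pre_succ, wordAct] at this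
  have h1 : ‖(if p 0 then B else A) ξ‖ = ‖ξ‖ := by
    have := key 0
    simpa [pre, wordAct] using this
  have hp := pyth_norm A B hAB ξ
  constructor
  · intro h0
    rw [h0] at key h1
    simp only [if_neg Bool.false_ne_true, Bool.false_eq_true, if_false] at key h1
    have hB : ‖B ξ‖ = 0 := by
      nlinarith [norm_nonneg (B ξ), norm_nonneg (A ξ)]
    refine ⟨⟨?_, fun n => by rw [key n, h1]⟩, norm_eq_zero.mp hB⟩
    intro hA0
    exact hne (norm_eq_zero.mp (by rw [← h1, hA0, norm_zero]))
  · intro h0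
    rw [h0] at key h1
    simp only [if_true] at key h1
    have hA : ‖A ξ‖ = 0 := by
      nlinarith [norm_nonneg (B ξ), norm_nonneg (A ξ)]
    refine ⟨⟨?_, fun n => by rw [key n, h1]⟩, norm_eq_zero.mp hA⟩
    intro hB0
    exact hne (norm_eq_zero.mp (by rw [← h1, hB0, norm_zero]))
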